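/- The And-Or path recursion identity: for Boolean variables t_0,...,t_{m-1} and an integer λ with 2λ < m - 2, the And-Or path g(t_0,...,t_{m-1}) = t_0 ∧ (t_1 ∨ (t_2 ∧ (... t_{m-1}))) satisfies g(t_0,...,t_{m-1}) = g(t_0,...,t_{2λ-1}) ∨ (t_0 ∧ t_2 ∧ t_4 ∧ ... ∧ t_{2λ-2} ∧ g(t_{2λ},...,t_{m-1})). -/

import Mathlib

mutual
  /-- And-Or path starting with AND: `gA [t₀,…,t_{m-1}] = t₀ ∧ (t₁ ∨ (t₂ ∧ …))`. -/
  def gA : List Bool → Bool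
    | [] => false
    | t :: r => t && gO r
  /-- Dual And-Or path starting with OR: `gO [t₀,…] = t₀ ∨ (t₁ ∧ …)`. -/
  def gO : List Bool → Bool
    | [] => true
    | t :: r => t || gA r
end

lemma gA_cons_cons (a b : Bool) (r : List Bool) :
    gA (a :: b :: r) = ((a && b) || (a && gA r)) := by
  simp [gA, gO, Bool.and_or_distrib_left]

lemma key (t : ℕ → Bool) : ∀ (lam s : ℕ) (r : List Bool),
    gA (((List.range' s (2 * lam)).map t) ++ r) =
      (gA ((List.range' s (2 * lam)).map t) ||
        ((((List.range' s lam 2).map t).all id) && gA r)) := by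
  intro lam
  induction lam with
  | zero => intro s r; simp [gA]
  | succ n ih =>
      intro s r
      have h2 : 2 * (n + 1) = (2 * n) + 1 + 1 := by ring
      rw [h2, List.range'_succ, List.range'_succ, List.range'_succ]
      simp only [List.map_cons, List.cons_append, gA_cons_cons, ih (s + 1 + 1) r,
        List.all_cons, id]
      cases t s <;> cases t (s + 1) <;>
        cases gA ((List.range' (s + 1 + 1) (2 * n)).map t) <;>
        cases (((List.range' (s + 2) n 2).map t).all id) <;> cases gA r <;> rfl

/-- Recursion (1) of Rautenbach et al.: for `2λ < m - 2`,
`g(t₀,…,t_{m-1}) = g(t₀,…,t_{2λ-1}) ∨ (t₀ ∧ t₂ ∧ … ∧ t_{2λ-2} ∧ g(t_{2λ},…,t_{m-1}))`. -/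
theorem aop_recursion_rautenbach (m lam : ℕ) (t : ℕ → Bool) (h : 2 * lam + 2 < m) :
    gA ((List.range m).map t) =
      (gA ((List.range (2 * lam)).map t) ||
        ((((List.range' 0 lam 2).map t).all id) &&
          gA ((List.range' (2 * lam) (m - 2 * lam)).map t))) := by
  have hm : m = (m - 2 * lam) + 2 * lam := by omega
  have hsplit : List.range m = List.range' 0 (2 * lam) ++ List.range' (2 * lam) (m - 2 * lam) := by
    rw [List.range_eq_range']
    conv_lhs => rw [hm]
    rw [Nat.add_comm (m - 2 * lam), ← List.range'_append_1, Nat.zero_add]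
  rw [hsplit, List.map_append, key t lam 0, ← List.range_eq_range']
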